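/- Let d_C be the transportation metric on Δ(Δ(U)) with ground cost the L1 distance on Δ(U), for a finite set U. If d_C(D_{X|W}, D_{X'|W'}) ≤ ε ≤ 1/2, then the conditional entropies of the associated random variables satisfy |H(X|W) - H(X'|W')| ≤ ε·log(|U|/ε). -/

import Mathlib

open Real Finset

lemma aux_negMulLog_le_inv_exp {x : ℝ} (hx : 0 ≤ x) :
    Real.negMulLog x ≤ (Real.exp 1)⁻¹ := by
  rcases eq_or_lt_of_le hx with h | h
  · rw [← h, Real.negMulLog_zero]; positivity
  · have he : (0:ℝ) < Real.exp 1 := Real.exp_pos 1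
    have h1 : (0:ℝ) < (Real.exp 1 * x)⁻¹ := by positivity
    have h2 := Real.log_le_sub_one_of_pos h1
    rw [Real.log_inv, Real.log_mul (ne_of_gt he) (ne_of_gt h), Real.log_exp] at h2
    have h4 : -Real.log x ≤ (Real.exp 1 * x)⁻¹ := by linarith
    have h5 : x * -Real.log x ≤ x * (Real.exp 1 * x)⁻¹ :=
      mul_le_mul_of_nonneg_left h4 hx
    have h3 : x * (Real.exp 1 * x)⁻¹ = (Real.exp 1)⁻¹ := by
      field_simp
    rw [h3] at h5
    rw [Real.negMulLog]
    nlinarith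

lemma aux_tangent {r m : ℝ} (hr : 0 ≤ r) (hm : 0 < m) :
    Real.negMulLog r ≤ m - (1 + Real.log m) * r := by
  rcases eq_or_lt_of_le hr with h | h
  · rw [← h, Real.negMulLog_zero]; simpa using hm.le
  · have h1 : (0:ℝ) < m / r := by positivity
    have h2 := Real.log_le_sub_one_of_pos h1
    rw [Real.log_div (ne_of_gt hm) (ne_of_gt h)] at h2
    have h3 : r * (Real.log m - Real.log r) ≤ r * (m / r - 1) :=
      mul_le_mul_of_nonneg_left h2 hr
    have h4 : r * (m / r - 1) = m - r := by field_simp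
    rw [Real.negMulLog]
    nlinarith

lemma aux_subadd {a b : ℝ} (ha : 0 ≤ a) (hab : a ≤ b) :
    Real.negMulLog b - Real.negMulLog a ≤ Real.negMulLog (b - a) := by
  rcases eq_or_lt_of_le ha with h0 | h0
  · rw [← h0]; simp
  rcases eq_or_lt_of_le hab with h1 | h1
  · rw [h1]; simp
  · have hr : 0 < b - a := by linarith
    have l1 : Real.log a ≤ Real.log b := Real.log_le_log h0 hab
    have l2 : Real.log (b - a) ≤ Real.log b := Real.log_le_log hr (by linarith)
    simp only [Real.negMulLog, neg_mul]
    nlinarith [mul_le_mul_of_nonneg_left l1 h0.le, mul_le_mul_of_nonneg_left l2 hr.le]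

lemma aux_lip {a b : ℝ} (ha : 0 ≤ a) (hab : a ≤ b) (hb : b ≤ 1) :
    Real.negMulLog a - Real.negMulLog b ≤ b - a := by
  rcases eq_or_lt_of_le ha with h0 | h0
  · rw [← h0, Real.negMulLog_zero]
    have := Real.negMulLog_nonneg (le_trans ha hab) hb
    linarith
  · have hbpos : 0 < b := lt_of_lt_of_le h0 hab
    have l1 : Real.log (b / a) ≤ b / a - 1 := Real.log_le_sub_one_of_pos (by positivity)
    rw [Real.log_div (ne_of_gt hbpos) (ne_of_gt h0)] at l1
    have l2 : a * (Real.log b - Real.log a) ≤ a * (b / a - 1) :=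
      mul_le_mul_of_nonneg_left l1 h0.le
    have l3 : a * (b / a - 1) = b - a := by field_simp
    have l4 : Real.log b ≤ 0 := Real.log_nonpos hbpos.le hb
    simp only [Real.negMulLog, neg_mul]
    nlinarith [mul_nonneg (sub_nonneg.mpr hab) (neg_nonneg.mpr l4)]

lemma aux_pointwise {a b m : ℝ} (ha0 : 0 ≤ a) (ha1 : a ≤ 1) (hb0 : 0 ≤ b) (hb1 : b ≤ 1)
    (hm0 : 0 < m) (hm1 : m ≤ (Real.exp 1)⁻¹) :
    |Real.negMulLog a - Real.negMulLog b| ≤ m - (1 + Real.log m) * |a - b| := by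
  have hlm : Real.log m ≤ -1 := by
    have := Real.log_le_log hm0 hm1
    rwa [Real.log_inv, Real.log_exp] at this
  have key : ∀ x y : ℝ, 0 ≤ x → x ≤ y → y ≤ 1 →
      |Real.negMulLog x - Real.negMulLog y| ≤ m - (1 + Real.log m) * (y - x) := by
    intro x y hx hxy hy
    have hr : 0 ≤ y - x := by linarith
    have htan : Real.negMulLog (y - x) ≤ m - (1 + Real.log m) * (y - x) := aux_tangent hr hm0
    by_cases hcase : y - x ≤ (Real.exp 1)⁻¹
    · have hup : Real.negMulLog y - Real.negMulLog x ≤ Real.negMulLog (y - x) :=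
        aux_subadd hx hxy
      have hdn : Real.negMulLog x - Real.negMulLog y ≤ y - x := aux_lip hx hxy hy
      have hrlef : y - x ≤ Real.negMulLog (y - x) := by
        rcases eq_or_lt_of_le hr with h | h
        · rw [← h]; simp
        · have hlr : Real.log (y - x) ≤ -1 := by
            have := Real.log_le_log h hcase
            rwa [Real.log_inv, Real.log_exp] at this
          rw [Real.negMulLog]
          nlinarith
      rw [abs_sub_le_iff]
      exact ⟨by linarith, by linarith⟩
    · push_neg at hcase
      have hfx1 : Real.negMulLog x ≤ (Real.exp 1)⁻¹ := aux_negMulLog_le_inv_exp hx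
      have hfy1 : Real.negMulLog y ≤ (Real.exp 1)⁻¹ := aux_negMulLog_le_inv_exp (hx.trans hxy)
      have hfx0 : 0 ≤ Real.negMulLog x := Real.negMulLog_nonneg hx (hxy.trans hy)
      have hfy0 : 0 ≤ Real.negMulLog y := Real.negMulLog_nonneg (hx.trans hxy) hy
      have he : (0:ℝ) < Real.exp 1 := Real.exp_pos 1
      have heinv : (0:ℝ) < (Real.exp 1)⁻¹ := by positivity
      have hbig : (Real.exp 1)⁻¹ ≤ m - (1 + Real.log m) * (y - x) := by
        have hh : 1 + Real.log m ≤ 0 := by linarith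
        have h1 : -(1 + Real.log m) * (Real.exp 1)⁻¹ ≤ -(1 + Real.log m) * (y - x) :=
          mul_le_mul_of_nonneg_left hcase.le (by linarith)
        have h2 : Real.log (Real.exp 1 * m) ≤ Real.exp 1 * m - 1 :=
          Real.log_le_sub_one_of_pos (by positivity)
        rw [Real.log_mul (Real.exp_ne_zero 1) (ne_of_gt hm0), Real.log_exp] at h2
        have h4 : (1 + Real.log m) * (Real.exp 1)⁻¹ ≤ (Real.exp 1 * m - 1) * (Real.exp 1)⁻¹ :=
          mul_le_mul_of_nonneg_right h2 heinv.le
        have h3 : (Real.exp 1 * m - 1) * (Real.exp 1)⁻¹ = m - (Real.exp 1)⁻¹ := by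
          field_simp
        nlinarith
      rw [abs_sub_le_iff]
      constructor <;> linarith
  rcases le_total a b with h | h
  · have h2 := key a b ha0 h hb1
    rw [abs_of_nonpos (by linarith : a - b ≤ 0), neg_sub]
    exact h2
  · have h2 := key b a hb0 h ha1
    rw [abs_sub_comm] at h2
    rw [abs_of_nonneg (by linarith : 0 ≤ a - b)]
    exact h2
    
/-- A coupling of two finitely supported weight vectors. -/
def IsCoupling {I J : Type*} [Fintype I] [Fintype J]
    (w1 : I → ℝ) (w2 : J → ℝ) (γ : I → J → ℝ) : Prop :=
  (∀ i j, 0 ≤ γ i j) ∧ (∀ i, ∑ j, γ i j = w1 i) ∧ (∀ j, ∑ i, γ i j = w2 j)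

/-- Transportation cost of a coupling, with ground cost the L1 distance between
the associated distributions on `U`. -/
noncomputable def tcost {I J U : Type*} [Fintype I] [Fintype J] [Fintype U]
    (pts1 : I → U → ℝ) (pts2 : J → U → ℝ) (γ : I → J → ℝ) : ℝ :=
  ∑ i, ∑ j, γ i j * ∑ u, |pts1 i u - pts2 j u|

/-- The conditional distance `d_C` between two finitely supported distributions over
distributions on `U`: the optimal transportation cost with ground cost `L1`. -/
noncomputable def dC {I J U : Type*} [Fintype I] [Fintype J] [Fintype U]
    (w1 : I → ℝ) (pts1 : I → U → ℝ) (w2 : J → ℝ) (pts2 : J → U → ℝ) : ℝ :=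
  sInf { c | ∃ γ, IsCoupling w1 w2 γ ∧ c = tcost pts1 pts2 γ }

/-- Conditional entropy `H(X|W) = E_{w~W}[H(X | W = w)]` of a conditional
distribution represented by weights `w` on conditional laws `pts`. -/
noncomputable def condEntRep {I U : Type*} [Fintype I] [Fintype U]
    (w : I → ℝ) (pts : I → U → ℝ) : ℝ :=
  ∑ i, w i * ∑ u, Real.negMulLog (pts i u)

lemma aux_entDiff {I J U : Type*} [Fintype I] [Fintype J] [Fintype U]
    (w1 : I → ℝ) (hw11 : ∑ i, w1 i = 1)
    (w2 : J → ℝ)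
    (pts1 : I → U → ℝ) (hp10 : ∀ i u, 0 ≤ pts1 i u) (hp11 : ∀ i, ∑ u, pts1 i u = 1)
    (pts2 : J → U → ℝ) (hp20 : ∀ j u, 0 ≤ pts2 j u) (hp21 : ∀ j, ∑ u, pts2 j u = 1)
    (γ : I → J → ℝ) (hγ : IsCoupling w1 w2 γ)
    (m : ℝ) (hm0 : 0 < m) (hm1 : m ≤ (Real.exp 1)⁻¹) :
    |condEntRep w1 pts1 - condEntRep w2 pts2| ≤
      m * (Fintype.card U) - (1 + Real.log m) * tcost pts1 pts2 γ := by
  obtain ⟨hγ0, hγ1, hγ2⟩ := hγ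
  have hub1 : ∀ i u, pts1 i u ≤ 1 := fun i u =>
    (Finset.single_le_sum (fun u' _ => hp10 i u') (Finset.mem_univ u)).trans (hp11 i).le
  have hub2 : ∀ j u, pts2 j u ≤ 1 := fun j u =>
    (Finset.single_le_sum (fun u' _ => hp20 j u') (Finset.mem_univ u)).trans (hp21 j).le
  have hsum : ∑ i, ∑ j, γ i j = 1 := by
    calc ∑ i, ∑ j, γ i j = ∑ i, w1 i := Finset.sum_congr rfl fun i _ => hγ1 i
    _ = 1 := hw11
  have e1 : condEntRep w1 pts1 = ∑ i, ∑ j, γ i j * ∑ u, Real.negMulLog (pts1 i u) := by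
    unfold condEntRep
    refine Finset.sum_congr rfl fun i _ => ?_
    rw [← hγ1 i, Finset.sum_mul]
  have e2 : condEntRep w2 pts2 = ∑ i, ∑ j, γ i j * ∑ u, Real.negMulLog (pts2 j u) := by
    unfold condEntRep
    rw [show (∑ i, ∑ j, γ i j * ∑ u, Real.negMulLog (pts2 j u))
        = ∑ j, ∑ i, γ i j * ∑ u, Real.negMulLog (pts2 j u) from Finset.sum_comm]
    refine Finset.sum_congr rfl fun j _ => ?_
    rw [← hγ2 j, Finset.sum_mul]
  have e3 : condEntRep w1 pts1 - condEntRep w2 pts2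
      = ∑ i, ∑ j, γ i j * ((∑ u, Real.negMulLog (pts1 i u)) - ∑ u, Real.negMulLog (pts2 j u)) := by
    rw [e1, e2, ← Finset.sum_sub_distrib]
    refine Finset.sum_congr rfl fun i _ => ?_
    rw [← Finset.sum_sub_distrib]
    exact Finset.sum_congr rfl fun j _ => by ring
  calc |condEntRep w1 pts1 - condEntRep w2 pts2|
      = |∑ i, ∑ j, γ i j * ((∑ u, Real.negMulLog (pts1 i u)) - ∑ u, Real.negMulLog (pts2 j u))| := by
        rw [e3]
    _ ≤ ∑ i, ∑ j, |γ i j * ((∑ u, Real.negMulLog (pts1 i u)) - ∑ u, Real.negMulLog (pts2 j u))| :=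
        (Finset.abs_sum_le_sum_abs _ _).trans
          (Finset.sum_le_sum fun i _ => Finset.abs_sum_le_sum_abs _ _)
    _ ≤ ∑ i, ∑ j, γ i j * (m * (Fintype.card U)
          - (1 + Real.log m) * ∑ u, |pts1 i u - pts2 j u|) := by
        refine Finset.sum_le_sum fun i _ => Finset.sum_le_sum fun j _ => ?_
        rw [abs_mul, abs_of_nonneg (hγ0 i j)]
        refine mul_le_mul_of_nonneg_left ?_ (hγ0 i j)
        calc |(∑ u, Real.negMulLog (pts1 i u)) - ∑ u, Real.negMulLog (pts2 j u)|
            = |∑ u, (Real.negMulLog (pts1 i u) - Real.negMulLog (pts2 j u))| := by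
              rw [Finset.sum_sub_distrib]
          _ ≤ ∑ u, |Real.negMulLog (pts1 i u) - Real.negMulLog (pts2 j u)| :=
              Finset.abs_sum_le_sum_abs _ _
          _ ≤ ∑ u, (m - (1 + Real.log m) * |pts1 i u - pts2 j u|) :=
              Finset.sum_le_sum fun u _ =>
                aux_pointwise (hp10 i u) (hub1 i u) (hp20 j u) (hub2 j u) hm0 hm1
          _ = m * (Fintype.card U) - (1 + Real.log m) * ∑ u, |pts1 i u - pts2 j u| := by
              rw [Finset.sum_sub_distrib, Finset.sum_const, ← Finset.mul_sum, Finset.card_univ,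
                nsmul_eq_mul, mul_comm]
    _ = m * (Fintype.card U) - (1 + Real.log m) * tcost pts1 pts2 γ := by
        unfold tcost
        rw [show (∑ i, ∑ j, γ i j * (m * (Fintype.card U)
              - (1 + Real.log m) * ∑ u, |pts1 i u - pts2 j u|))
            = ∑ i, ∑ j, (m * (Fintype.card U) * γ i j
              - (1 + Real.log m) * (γ i j * ∑ u, |pts1 i u - pts2 j u|)) from
          Finset.sum_congr rfl fun i _ => Finset.sum_congr rfl fun j _ => by ring]
        simp only [Finset.sum_sub_distrib, ← Finset.mul_sum]
        rw [hsum, mul_one]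

/-- If two conditional distributions are within `ε ≤ 1/2` in the transportation
metric `d_C`, then the conditional entropies of the associated random variables
differ by at most `ε · log(|U|/ε)`. -/
theorem condEnt_close_of_dC_close {I J U : Type*} [Fintype I] [Fintype J] [Fintype U]
    (w1 : I → ℝ) (hw10 : ∀ i, 0 ≤ w1 i) (hw11 : ∑ i, w1 i = 1)
    (w2 : J → ℝ) (hw20 : ∀ j, 0 ≤ w2 j) (hw21 : ∑ j, w2 j = 1)
    (pts1 : I → U → ℝ) (hp10 : ∀ i u, 0 ≤ pts1 i u) (hp11 : ∀ i, ∑ u, pts1 i u = 1)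
    (pts2 : J → U → ℝ) (hp20 : ∀ j u, 0 ≤ pts2 j u) (hp21 : ∀ j, ∑ u, pts2 j u = 1)
    (ε : ℝ) (hd : dC w1 pts1 w2 pts2 ≤ ε) (hε : ε ≤ 1 / 2) :
    |condEntRep w1 pts1 - condEntRep w2 pts2| ≤ ε * Real.log (Fintype.card U / ε) := by
  classical
  have hS0 : ∀ x ∈ { c | ∃ γ, IsCoupling w1 w2 γ ∧ c = tcost pts1 pts2 γ }, 0 ≤ x := by
    rintro x ⟨γ, hγ, rfl⟩
    exact Finset.sum_nonneg fun i _ => Finset.sum_nonneg fun j _ =>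
      mul_nonneg (hγ.1 i j) (Finset.sum_nonneg fun u _ => abs_nonneg _)
  have hSne : Set.Nonempty { c | ∃ γ, IsCoupling w1 w2 γ ∧ c = tcost pts1 pts2 γ } := by
    refine ⟨tcost pts1 pts2 (fun i j => w1 i * w2 j), fun i j => w1 i * w2 j, ⟨?_, ?_, ?_⟩, rfl⟩
    · exact fun i j => mul_nonneg (hw10 i) (hw20 j)
    · intro i; rw [← Finset.mul_sum, hw21, mul_one]
    · intro j; rw [← Finset.sum_mul, hw11, one_mul]
  have hbdd : BddBelow { c | ∃ γ, IsCoupling w1 w2 γ ∧ c = tcost pts1 pts2 γ } := ⟨0, hS0⟩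
  have hdC0 : (0:ℝ) ≤ dC w1 pts1 w2 pts2 := Real.sInf_nonneg hS0
  have hε0 : 0 ≤ ε := le_trans hdC0 hd
  -- dispose of the degenerate cases on `card U`
  have hIne : Nonempty I := by
    by_contra h
    rw [not_nonempty_iff] at h
    rw [Finset.univ_eq_empty, Finset.sum_empty] at hw11
    norm_num at hw11
  rcases Nat.eq_zero_or_pos (Fintype.card U) with hc0 | hcpos
  · obtain ⟨i⟩ := hIne
    haveI : IsEmpty U := Fintype.card_eq_zero_iff.mp hc0
    have := hp11 i
    rw [Finset.univ_eq_empty, Finset.sum_empty] at this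
    norm_num at this
  by_cases hc1 : Fintype.card U = 1
  · obtain ⟨x, hx⟩ := Fintype.card_eq_one_iff.mp hc1
    have huniv : (Finset.univ : Finset U) = {x} :=
      Finset.eq_singleton_iff_unique_mem.mpr ⟨Finset.mem_univ x, fun y _ => hx y⟩
    have hH1 : condEntRep w1 pts1 = 0 := by
      unfold condEntRep
      refine Finset.sum_eq_zero fun i _ => ?_
      have h1 : pts1 i x = 1 := by
        have := hp11 i; rwa [huniv, Finset.sum_singleton] at this
      rw [huniv, Finset.sum_singleton, h1, Real.negMulLog_one, mul_zero]
    have hH2 : condEntRep w2 pts2 = 0 := by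
      unfold condEntRep
      refine Finset.sum_eq_zero fun j _ => ?_
      have h1 : pts2 j x = 1 := by
        have := hp21 j; rwa [huniv, Finset.sum_singleton] at this
      rw [huniv, Finset.sum_singleton, h1, Real.negMulLog_one, mul_zero]
    rw [hH1, hH2, sub_zero, abs_zero]
    rcases eq_or_lt_of_le hε0 with h | h
    · rw [← h]; simp
    · refine mul_nonneg hε0 (Real.log_nonneg ?_)
      rw [hc1, le_div_iff₀ h]
      norm_num
      linarith
  -- main case : 2 ≤ card U
  have hc2 : (2:ℝ) ≤ (Fintype.card U : ℝ) := by
    have : 2 ≤ Fintype.card U := by omega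
    exact_mod_cast this
  have hcpos' : (0:ℝ) < (Fintype.card U : ℝ) := by linarith
  have hinv4 : (1:ℝ)/4 ≤ (Real.exp 1)⁻¹ := by
    have h4 : Real.exp 1 ≤ 4 := by nlinarith [Real.exp_one_lt_d9]
    have := inv_anti₀ (Real.exp_pos 1) h4
    calc (1:ℝ)/4 = (4:ℝ)⁻¹ := by norm_num
    _ ≤ (Real.exp 1)⁻¹ := this
  have main : ∀ θ : ℝ, 0 < θ →
      |condEntRep w1 pts1 - condEntRep w2 pts2|
        ≤ ε * Real.log (Fintype.card U / ε) + θ := by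
    intro θ hθ
    set θ1 := min (θ/2) (1/2) with hθ1def
    have hθ1pos : 0 < θ1 := lt_min (by linarith) (by norm_num)
    have hθ1le : θ1 ≤ 1/2 := min_le_right _ _
    have hθ1leθ : θ1 ≤ θ/2 := min_le_left _ _
    set εb := max ε θ1 with hεbdef
    have hεbpos : 0 < εb := lt_of_lt_of_le hθ1pos (le_max_right _ _)
    have hεble : εb ≤ 1/2 := max_le hε hθ1le
    have hεge : ε ≤ εb := le_max_left _ _
    set m := εb / (Fintype.card U : ℝ) with hmdef
    have hm0 : 0 < m := div_pos hεbpos hcpos'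
    have hm1 : m ≤ (Real.exp 1)⁻¹ := by
      have hm14 : m ≤ 1/4 := by
        rw [hmdef, div_le_iff₀ hcpos']
        nlinarith
      linarith
    have hlm : Real.log m ≤ -1 := by
      have := Real.log_le_log hm0 hm1
      rwa [Real.log_inv, Real.log_exp] at this
    set B := -(1 + Real.log m) with hBdef
    have hB0 : 0 ≤ B := by rw [hBdef]; linarith
    have hB1 : (0:ℝ) < B + 1 := by linarith
    set D := θ1 / (B + 1) with hDdef
    have hDpos : 0 < D := div_pos hθ1pos hB1
    clear_value θ1 εb m B D
    have hlt : dC w1 pts1 w2 pts2 < ε + D := lt_of_le_of_lt hd (by linarith)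
    rw [dC] at hlt
    obtain ⟨xx, ⟨γ, hγ, rfl⟩, hxlt⟩ := (csInf_lt_iff hbdd hSne).mp hlt
    have key := aux_entDiff w1 hw11 w2 pts1 hp10 hp11 pts2 hp20 hp21 γ hγ m hm0 hm1
    have h1 : m * (Fintype.card U : ℝ) = εb := by
      rw [hmdef]; field_simp
    have step1 : |condEntRep w1 pts1 - condEntRep w2 pts2| ≤ εb + B * (ε + D) := by
      have h2 : B * tcost pts1 pts2 γ ≤ B * (ε + D) :=
        mul_le_mul_of_nonneg_left hxlt.le hB0
      have h3 : m * (Fintype.card U : ℝ) - (1 + Real.log m) * tcost pts1 pts2 γ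
          = εb + B * tcost pts1 pts2 γ := by
        rw [h1, hBdef]; ring
      rw [h3] at key
      linarith
    have step2 : |condEntRep w1 pts1 - condEntRep w2 pts2| ≤ εb + B * ε + θ1 := by
      have hBD : B * D ≤ θ1 := by
        have : B * D = (B * θ1) / (B + 1) := by rw [hDdef]; ring
        rw [this, div_le_iff₀ hB1]
        nlinarith
      have hexpand : B * (ε + D) = B * ε + B * D := mul_add B ε D
      linarith
    have step3 : εb + B * ε ≤ θ1 + ε * Real.log ((Fintype.card U : ℝ) / ε) := by
      have h4 : εb ≤ ε + θ1 := by rw [hεbdef]; exact max_le (by linarith) (by linarith)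
      have h5 : -(ε * Real.log m) ≤ ε * Real.log ((Fintype.card U : ℝ) / ε) := by
        rcases eq_or_lt_of_le hε0 with h | hεpos
        · rw [← h]; simp
        · have hlogle : Real.log (ε / (Fintype.card U : ℝ)) ≤ Real.log m := by
            rw [hmdef]
            exact Real.log_le_log (div_pos hεpos hcpos') (by gcongr)
          have h6 : ε * (-Real.log m) ≤ ε * Real.log ((Fintype.card U : ℝ) / ε) := by
            have h7 : -Real.log (ε / (Fintype.card U : ℝ))
                = Real.log ((Fintype.card U : ℝ) / ε) := by
              rw [← Real.log_inv, inv_div]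
            rw [← h7]
            exact mul_le_mul_of_nonneg_left (neg_le_neg hlogle) hε0
          linarith
      have hexp : B * ε = -ε - ε * Real.log m := by rw [hBdef]; ring
      linarith
    linarith [step1, step2, step3, hθ1leθ]
  by_contra hcon
  push_neg at hcon
  have := main ((|condEntRep w1 pts1 - condEntRep w2 pts2| - ε * Real.log (Fintype.card U / ε)) / 2)
    (by linarith)
  linarith
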